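/- Let L be an m×k full-rank matrix over F_q with minimal induced equation length s(L). If B₁ and B₂ are two distinct maximal good sets for L, then |B₁ ∩ B₂| ≤ s(L) − 2. Consequently, every good set is contained in a unique maximal good set. -/

import Mathlib

set_option synthInstance.maxHeartbeats 1000000
set_option maxHeartbeats 1000000
set_option linter.unusedSectionVars false


open scoped BigOperators Classical

/-- The number of nonzero coordinates (support size) of a vector. -/
noncomputable def suppCard {F : Type*} [Field F] {k : ℕ} (v : Fin k → F) : ℕ :=
  (Finset.univ.filter fun j => v j ≠ 0).card

/-- `s(L)`: the minimal support size of a nonzero vector in the row space of `L`,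
i.e. the minimal length of an equation induced by `L`. -/
noncomputable def minLen {F : Type*} [Field F] {m k : ℕ} (L : Matrix (Fin m) (Fin k) F) : ℕ :=
  sInf {c | ∃ v ∈ Submodule.span F (Set.range fun i => L i), v ≠ 0 ∧ suppCard v = c}

/-- The rank of the matrix obtained from `L` by deleting the columns indexed by `B`. -/
noncomputable def delRank {F : Type*} [Field F] [Fintype F] {m k : ℕ}
    (L : Matrix (Fin m) (Fin k) F) (B : Finset (Fin k)) : ℕ :=
  (L.submatrix id (fun j : {j : Fin k // j ∉ B} => (j : Fin k))).rank

/-- `B` is good for `L`: writing `|B| = s(L) + t` with `t ≥ 0`, deleting the columns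
indexed by `B` decreases the rank by exactly `t + 1`. -/
noncomputable def Good {F : Type*} [Field F] [Fintype F] {m k : ℕ}
    (L : Matrix (Fin m) (Fin k) F) (B : Finset (Fin k)) : Prop :=
  minLen L ≤ B.card ∧ delRank L B + (B.card - minLen L + 1) = m

section Aux
variable {F : Type*} [Field F] [Fintype F] {m k : ℕ}

noncomputable def myRS (L : Matrix (Fin m) (Fin k) F) : Submodule F (Fin k → F) :=
  Submodule.span F (Set.range fun i => L i)

noncomputable def myProj (B : Finset (Fin k)) : (Fin k → F) →ₗ[F] ({j : Fin k // j ∉ B} → F) :=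
  LinearMap.funLeft F F (fun j => (j : Fin k))

noncomputable def myV (L : Matrix (Fin m) (Fin k) F) (B : Finset (Fin k)) :
    Submodule F (Fin k → F) := myRS L ⊓ LinearMap.ker (myProj B)

lemma mem_ker_myProj {B : Finset (Fin k)} {v : Fin k → F} :
    v ∈ LinearMap.ker (myProj B) ↔ ∀ j ∉ B, v j = 0 := by
  constructor
  · intro h j hj
    have := congrFun (LinearMap.mem_ker.mp h) ⟨j, hj⟩
    simpa [myProj, LinearMap.funLeft] using this
  · intro h
    rw [LinearMap.mem_ker]
    funext j
    exact h j j.2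

lemma myV_inter (L : Matrix (Fin m) (Fin k) F) (B₁ B₂ : Finset (Fin k)) :
    myV L (B₁ ∩ B₂) = myV L B₁ ⊓ myV L B₂ := by
  ext v
  simp only [myV, Submodule.mem_inf, mem_ker_myProj]
  constructor
  · rintro ⟨h1, h2⟩
    exact ⟨⟨h1, fun j hj => h2 j (fun hc => hj (Finset.mem_inter.mp hc).1)⟩,
           ⟨h1, fun j hj => h2 j (fun hc => hj (Finset.mem_inter.mp hc).2)⟩⟩
  · rintro ⟨⟨h1, h2⟩, ⟨_, h3⟩⟩
    refine ⟨h1, fun j hj => ?_⟩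
    by_cases hb : j ∈ B₁
    · exact h3 j (fun hc => hj (Finset.mem_inter.mpr ⟨hb, hc⟩))
    · exact h2 j hb

lemma myV_union_le (L : Matrix (Fin m) (Fin k) F) (B₁ B₂ : Finset (Fin k)) :
    myV L B₁ ⊔ myV L B₂ ≤ myV L (B₁ ∪ B₂) := by
  apply sup_le <;>
  · intro v hv
    obtain ⟨h1, h2⟩ := hv
    exact ⟨h1, mem_ker_myProj.mpr fun j hj => mem_ker_myProj.mp h2 j
      (fun hc => hj (Finset.mem_union.mpr (by tauto)))⟩

lemma lemSingleton (L : Matrix (Fin m) (Fin k) F) (B : Finset (Fin k))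
    (hs : minLen L ≤ B.card + 1) :
    Module.finrank F (myV L B) + minLen L ≤ B.card + 1 := by
  classical
  set r := Module.finrank F (myV L B) with hr
  rcases Nat.eq_zero_or_pos r with h0 | hpos
  · omega
  -- r ≤ B.card via injectivity of restriction to B
  have hinj : r ≤ B.card := by
    set ρ : myV L B →ₗ[F] (↥B → F) :=
      (LinearMap.funLeft F F (fun j : ↥B => (j : Fin k))).comp (myV L B).subtype with hρ
    have hinj : Function.Injective ρ := by
      rw [← LinearMap.ker_eq_bot]
      rw [LinearMap.ker_eq_bot']
      rintro ⟨v, hv⟩ hz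
      ext j
      by_cases hb : j ∈ B
      · exact congrFun hz ⟨j, hb⟩
      · exact mem_ker_myProj.mp hv.2 j hb
    calc r ≤ Module.finrank F (↥B → F) := LinearMap.finrank_le_finrank_of_injective hinj
    _ = B.card := by rw [Module.finrank_fintype_fun_eq_card, Fintype.card_coe]
  obtain ⟨T, hTB, hT⟩ := Finset.exists_subset_card_eq (s := B) (n := r - 1) (by omega)
  set σ : myV L B →ₗ[F] (↥T → F) :=
    (LinearMap.funLeft F F (fun j : ↥T => (j : Fin k))).comp (myV L B).subtype with hσ
  have hker : LinearMap.ker σ ≠ ⊥ := by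
    intro hbot
    have h1 := LinearMap.finrank_range_add_finrank_ker σ
    rw [hbot, finrank_bot] at h1
    have h2 : Module.finrank F (LinearMap.range σ) ≤ Module.finrank F (↥T → F) :=
      Submodule.finrank_le _
    rw [Module.finrank_fintype_fun_eq_card, Fintype.card_coe, hT] at h2
    omega
  obtain ⟨v, hvk, hv0⟩ := Submodule.exists_mem_ne_zero_of_ne_bot hker
  have hw0 : (v : Fin k → F) ≠ 0 := by
    simpa [Submodule.coe_eq_zero] using hv0
  have hsupp : (Finset.univ.filter fun j => (v : Fin k → F) j ≠ 0) ⊆ B \ T := by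
    intro j hj
    rw [Finset.mem_filter] at hj
    rw [Finset.mem_sdiff]
    constructor
    · by_contra hb
      exact hj.2 (mem_ker_myProj.mp v.2.2 j hb)
    · intro ht
      exact hj.2 (congrFun (LinearMap.mem_ker.mp hvk) ⟨j, ht⟩)
  have hcard : suppCard (v : Fin k → F) ≤ B.card - (r - 1) := by
    calc suppCard (v : Fin k → F) ≤ (B \ T).card := Finset.card_le_card hsupp
    _ = B.card - (r - 1) := by rw [Finset.card_sdiff_of_subset hTB, hT]
  have hmin : minLen L ≤ suppCard (v : Fin k → F) :=
    Nat.sInf_le ⟨(v : Fin k → F), v.2.1, hw0, rfl⟩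
  omega

lemma lemA (L : Matrix (Fin m) (Fin k) F) (hrank : L.rank = m) (B : Finset (Fin k)) :
    delRank L B + Module.finrank F (myV L B) = m := by
  classical
  set π := myProj (F := F) B
  have h1 : delRank L B = Module.finrank F (Submodule.map π (myRS L)) := by
    have h := Matrix.rank_eq_finrank_span_row
      (L.submatrix id (fun j : {j : Fin k // j ∉ B} => (j : Fin k)))
    have heq : Submodule.span F
        (Set.range (L.submatrix id (fun j : {j : Fin k // j ∉ B} => (j : Fin k))))
        = Submodule.map π (myRS L) := by
      rw [myRS, Submodule.map_span]
      congr 1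
      rw [← Set.range_comp]
      rfl
    rw [delRank, h, ← heq]
    rfl
  have h2 : Module.finrank F (myRS L) = m := by
    have := Matrix.rank_eq_finrank_span_row L
    rw [hrank] at this
    exact this.symm
  have h3 := LinearMap.finrank_range_add_finrank_ker (π.domRestrict (myRS L))
  rw [LinearMap.range_domRestrict, LinearMap.ker_domRestrict] at h3
  have h4 : Module.finrank F (Submodule.comap (myRS L).subtype (LinearMap.ker π))
      = Module.finrank F (myV L B) := by
    have hle : myV L B ≤ myRS L := inf_le_left
    have : Submodule.comap (myRS L).subtype (LinearMap.ker π)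
        = Submodule.comap (myRS L).subtype (myV L B) := by
      ext x; simp [myV]
      exact Iff.rfl
    rw [this]
    exact (Submodule.comapSubtypeEquivOfLe hle).finrank_eq
  rw [h4, h2] at h3
  rw [h1, h3]

lemma goodIff (L : Matrix (Fin m) (Fin k) F) (hrank : L.rank = m) (B : Finset (Fin k)) :
    Good L B ↔ (minLen L ≤ B.card ∧
      Module.finrank F (myV L B) + minLen L = B.card + 1) := by
  have h := lemA L hrank B
  unfold Good
  omega

lemma good_union (L : Matrix (Fin m) (Fin k) F) (hrank : L.rank = m)
    {B₁ B₂ : Finset (Fin k)} (h1 : Good L B₁) (h2 : Good L B₂)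
    (hI : minLen L ≤ (B₁ ∩ B₂).card + 1) : Good L (B₁ ∪ B₂) := by
  classical
  rw [goodIff L hrank] at h1 h2 ⊢
  have hsub := Submodule.finrank_sup_add_finrank_inf_eq (myV L B₁) (myV L B₂)
  rw [← myV_inter] at hsub
  have hle : Module.finrank F ((myV L B₁) ⊔ (myV L B₂) : Submodule F (Fin k → F))
      ≤ Module.finrank F (myV L (B₁ ∪ B₂)) :=
    Submodule.finrank_mono (myV_union_le L B₁ B₂)
  have hSI := lemSingleton L (B₁ ∩ B₂) hI
  have hcard1 : B₁.card ≤ (B₁ ∪ B₂).card := Finset.card_le_card Finset.subset_union_left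
  have hSU := lemSingleton L (B₁ ∪ B₂) (by omega)
  have hcards := Finset.card_union_add_card_inter B₁ B₂
  omega

theorem maximal_good_sets_intersection' (L : Matrix (Fin m) (Fin k) F)
    (hrank : L.rank = m) :
    (∀ B₁ B₂ : Finset (Fin k),
        Good L B₁ → (∀ C, Good L C → B₁ ⊆ C → C = B₁) →
        Good L B₂ → (∀ C, Good L C → B₂ ⊆ C → C = B₂) →
        B₁ ≠ B₂ → (B₁ ∩ B₂).card + 2 ≤ minLen L) ∧
    (∀ B : Finset (Fin k), Good L B →
        ∃! M : Finset (Fin k),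
          Good L M ∧ (∀ C, Good L C → M ⊆ C → C = M) ∧ B ⊆ M) := by
  classical
  constructor
  · intro B₁ B₂ h1 hmax1 h2 hmax2 hne
    by_contra hc
    have hI : minLen L ≤ (B₁ ∩ B₂).card + 1 := by omega
    have hU := good_union L hrank h1 h2 hI
    have hU1 : B₁ ∪ B₂ = B₁ := hmax1 _ hU Finset.subset_union_left
    have hsub : B₂ ⊆ B₁ := Finset.union_eq_left.mp hU1
    exact hne (hmax2 B₁ h1 hsub)
  · intro B hB
    set S : Finset (Finset (Fin k)) :=
      Finset.univ.filter (fun C => Good L C ∧ B ⊆ C) with hS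
    have hne : S.Nonempty := ⟨B, by simp [hS, hB]⟩
    obtain ⟨M, hMS, hMmax⟩ := S.exists_max_image Finset.card hne
    rw [hS, Finset.mem_filter] at hMS
    obtain ⟨-, hMg, hBM⟩ := hMS
    have hmaxM : ∀ C, Good L C → M ⊆ C → C = M := by
      intro C hCg hMC
      have hCS : C ∈ S := by
        rw [hS, Finset.mem_filter]
        exact ⟨Finset.mem_univ _, hCg, hBM.trans hMC⟩
      exact (Finset.eq_of_subset_of_card_le hMC (hMmax C hCS)).symm
    refine ⟨M, ⟨hMg, hmaxM, hBM⟩, ?_⟩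
    rintro M' ⟨hM'g, hmaxM', hBM'⟩
    have hIB : B ⊆ M' ∩ M := Finset.subset_inter hBM' hBM
    have hs : minLen L ≤ B.card := hB.1
    have hI : minLen L ≤ (M' ∩ M).card + 1 := by
      have := Finset.card_le_card hIB
      omega
    have hU := good_union L hrank hM'g hMg hI
    have e1 : M' ∪ M = M' := hmaxM' _ hU Finset.subset_union_left
    have e2 : M' ∪ M = M := hmaxM _ hU Finset.subset_union_right
    rw [← e1, e2]

end Aux

/-- two distinct maximal good sets intersect in at most `s(L) - 2` elements;
consequently, every good set is contained in a unique maximal good set. -/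
theorem maximal_good_sets_intersection
    {F : Type*} [Field F] [Fintype F] {m k : ℕ} (L : Matrix (Fin m) (Fin k) F)
    (hrank : L.rank = m) :
    (∀ B₁ B₂ : Finset (Fin k),
        Good L B₁ → (∀ C, Good L C → B₁ ⊆ C → C = B₁) →
        Good L B₂ → (∀ C, Good L C → B₂ ⊆ C → C = B₂) →
        B₁ ≠ B₂ → (B₁ ∩ B₂).card + 2 ≤ minLen L) ∧
    (∀ B : Finset (Fin k), Good L B →
        ∃! M : Finset (Fin k),
          Good L M ∧ (∀ C, Good L C → M ⊆ C → C = M) ∧ B ⊆ M) := by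
  exact maximal_good_sets_intersection' L hrank
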